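/- Let (g_k) be a sequence of real d×d matrices converging to g, such that for every k the number ℓ_1(g_k) (the maximum modulus of the eigenvalues of g_k) is itself a real eigenvalue of g_k. Then ℓ_1(g) is a real eigenvalue of g; that is, a limit of positively semiproximal matrices is positively semiproximal. -/

import Mathlib

open Matrix Polynomial

/-- The multiset of complex eigenvalues (with algebraic multiplicity) of a real matrix. -/
noncomputable def specC {n : Type*} [Fintype n] [DecidableEq n]
    (A : Matrix n n ℝ) : Multiset ℂ :=
  ((A.map (algebraMap ℝ ℂ)).charpoly).roots

/-- The moduli of the eigenvalues of `A`, sorted in decreasing order. -/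
noncomputable def ellList {n : Type*} [Fintype n] [DecidableEq n]
    (A : Matrix n n ℝ) : List ℝ :=
  ((specC A).map (fun z : ℂ => ‖z‖)).sort (· ≥ ·)

/-- `ell A i` is `ℓ_i(A)`, the `i`-th largest modulus of an eigenvalue of `A` (1-based). -/
noncomputable def ell {n : Type*} [Fintype n] [DecidableEq n]
    (A : Matrix n n ℝ) (i : ℕ) : ℝ :=
  (ellList A).getD (i - 1) 0

/-- The singular values of `g`, i.e. the square roots of the eigenvalues of `g * gᴴ`,
sorted in decreasing order. -/
noncomputable def svalList {n : Type*} [Fintype n] [DecidableEq n]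
    (g : Matrix n n ℝ) : List ℝ :=
  (Finset.univ.val.map fun i =>
    Real.sqrt ((Matrix.isHermitian_mul_conjTranspose_self g).eigenvalues i)).sort (· ≥ ·)

/-- `sval g i` is `σ_i(g)`, the `i`-th largest singular value of `g` (1-based). -/
noncomputable def sval {n : Type*} [Fintype n] [DecidableEq n]
    (g : Matrix n n ℝ) (i : ℕ) : ℝ :=
  (svalList g).getD (i - 1) 0

/-- The multiset of eigenvalues of the `i`-th exterior power `∧^i A`: products of the
eigenvalues of `A` over `i`-element sub-multisets. -/
noncomputable def wedgeSpec {n : Type*} [Fintype n] [DecidableEq n]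
    (i : ℕ) (A : Matrix n n ℝ) : Multiset ℂ :=
  ((specC A).powersetCard i).map Multiset.prod

/-! ### Auxiliary lemmas -/

lemma eval_charpoly' {n : Type*} [Fintype n] [DecidableEq n] {R : Type*} [CommRing R]
    (M : Matrix n n R) (x : R) :
    M.charpoly.eval x = (x • (1 : Matrix n n R) - M).det := by
  unfold Matrix.charpoly
  rw [show (Polynomial.eval x (Matrix.charmatrix M).det) =
      ((Matrix.charmatrix M).map (Polynomial.evalRingHom x)).det from
    (RingHom.map_det (Polynomial.evalRingHom x) _)]
  congr 1
  ext i j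
  by_cases h : i = j
  · subst h; simp [Matrix.charmatrix_apply_eq]
  · simp [Matrix.charmatrix_apply_ne _ _ _ h, Matrix.one_apply_ne h]

lemma mem_spectrum_iff_charpoly {n : Type*} [Fintype n] [DecidableEq n] {K : Type*} [Field K]
    (M : Matrix n n K) (z : K) :
    z ∈ spectrum K M ↔ M.charpoly.IsRoot z := by
  rw [spectrum.mem_iff, Polynomial.IsRoot, eval_charpoly']
  have h : (algebraMap K (Matrix n n K)) z - M = z • (1 : Matrix n n K) - M := by
    rw [Algebra.algebraMap_eq_smul_one]
  rw [h, Matrix.isUnit_iff_isUnit_det, isUnit_iff_ne_zero, not_ne_iff]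

lemma card_specC {n : Type*} [Fintype n] [DecidableEq n] (A : Matrix n n ℝ) :
    (specC A).card = Fintype.card n := by
  unfold specC
  have h1 := Polynomial.splits_iff_card_roots.mp
    (IsAlgClosed.splits ((A.map (algebraMap ℝ ℂ)).charpoly))
  rw [h1, Matrix.charpoly_natDegree_eq_dim]

lemma ell_one_mem {n : Type*} [Fintype n] [DecidableEq n] (A : Matrix n n ℝ)
    (h : (specC A).card ≠ 0) :
    (∃ z ∈ specC A, ‖z‖ = ell A 1) ∧
      ∀ z ∈ specC A, ‖z‖ ≤ ell A 1 := by
  have hlen : (ellList A).length = (specC A).card := by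
    simp [ellList, Multiset.length_sort]
  have hne : ellList A ≠ [] := by
    intro hnil; rw [hnil] at hlen; simp at hlen; exact h hlen.symm
  obtain ⟨a, t, hat⟩ := List.exists_cons_of_ne_nil hne
  have hell : ell A 1 = a := by simp [ell, hat]
  have hsorted : (ellList A).Pairwise (· ≥ ·) := Multiset.pairwise_sort _ _
  have hmem : ∀ x, x ∈ ellList A ↔ x ∈ (specC A).map (fun z : ℂ => ‖z‖) :=
    fun x => Multiset.mem_sort _
  constructor
  · have hmema : a ∈ ellList A := by rw [hat]; exact List.mem_cons_self
    rw [hmem, Multiset.mem_map] at hmema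
    obtain ⟨z, hz, hza⟩ := hmema
    exact ⟨z, hz, by rw [hza, hell]⟩
  · intro z hz
    have hmemz : ‖z‖ ∈ ellList A := by
      rw [hmem, Multiset.mem_map]; exact ⟨z, hz, rfl⟩
    rw [hat] at hmemz hsorted
    rw [hell]
    rcases List.mem_cons.mp hmemz with h1 | h1
    · rw [h1]
    · exact (List.pairwise_cons.mp hsorted).1 _ h1

lemma isRoot_iff_mem_specC {n : Type*} [Fintype n] [DecidableEq n] (A : Matrix n n ℝ)
    (r : ℝ) : A.charpoly.IsRoot r ↔ (r : ℂ) ∈ specC A := by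
  unfold specC
  rw [Matrix.charpoly_map, Polynomial.mem_roots
    (((Matrix.charpoly_monic A).map (algebraMap ℝ ℂ)).ne_zero)]
  rw [Polynomial.IsRoot, Polynomial.IsRoot, Polynomial.eval_map,
    show ((r : ℂ)) = algebraMap ℝ ℂ r from rfl, Polynomial.eval₂_at_apply]
  simp

section
attribute [local instance] Matrix.linftyOpNormedRing Matrix.linftyOpNormedAlgebra

lemma abs_root_le {d : ℕ} (hd : 0 < d) (M : Matrix (Fin d) (Fin d) ℝ) {z : ℂ}
    (hz : z ∈ specC M) : ‖z‖ ≤ ∑ i, ∑ j, |M i j| := by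
  haveI : Nonempty (Fin d) := ⟨⟨0, hd⟩⟩
  have hz' : z ∈ spectrum ℂ (M.map (algebraMap ℝ ℂ)) := by
    rw [mem_spectrum_iff_charpoly]
    exact (Polynomial.mem_roots (((Matrix.charpoly_monic _)).ne_zero)).mp hz
  have h1 : ‖z‖ ≤ ‖M.map (algebraMap ℝ ℂ)‖ := spectrum.norm_le_norm_of_mem hz'
  have key : ‖M.map (algebraMap ℝ ℂ)‖₊ ≤ ∑ i, ∑ j, ‖M i j‖₊ := by
    rw [Matrix.linfty_opNNNorm_def]
    refine Finset.sup_le fun i _ => ?_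
    have he : (∑ j, ‖(M.map (algebraMap ℝ ℂ)) i j‖₊) = ∑ j, ‖M i j‖₊ := by
      congr 1; ext j
      simp [Matrix.map_apply]
    rw [he]
    exact Finset.single_le_sum (f := fun i => ∑ j, ‖M i j‖₊)
      (fun _ _ => zero_le) (Finset.mem_univ i)
  have h3 : ‖M.map (algebraMap ℝ ℂ)‖ ≤ ∑ i, ∑ j, |M i j| := by
    have h4 := NNReal.coe_le_coe.mpr key
    rw [coe_nnnorm] at h4
    refine h4.trans (le_of_eq ?_)
    simp only [NNReal.coe_sum, coe_nnnorm, Real.norm_eq_abs]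
  exact h1.trans h3

end

lemma nnnorm_eval_eq_prod (p : Polynomial ℂ) (hp : p.Monic) (z : ℂ) :
    ‖p.eval z‖₊ = ((p.roots.map (fun w => ‖z - w‖₊)).prod) := by
  conv_lhs => rw [(IsAlgClosed.splits p).eq_prod_roots_of_monic hp]
  rw [Polynomial.eval_multiset_prod]
  have h := map_multiset_prod (nnnormHom : ℂ →*₀ NNReal)
    (Multiset.map (eval z) (Multiset.map (fun a => X - C a) p.roots))
  rw [show ((nnnormHom : ℂ →*₀ NNReal)
      ((Multiset.map (eval z) (Multiset.map (fun a => X - C a) p.roots)).prod)) =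
      ‖(Multiset.map (eval z) (Multiset.map (fun a => X - C a) p.roots)).prod‖₊ from rfl] at h
  rw [h, Multiset.map_map, Multiset.map_map]
  congr 1
  ext w
  simp

set_option maxHeartbeats 1000000 in
theorem stmt_3 {d : ℕ} (g : ℕ → Matrix (Fin d) (Fin d) ℝ) (A : Matrix (Fin d) (Fin d) ℝ)
    (hlim : Filter.Tendsto g Filter.atTop (nhds A))
    (hpsp : ∀ k, ((g k).charpoly).IsRoot (ell (g k) 1)) :
    (A.charpoly).IsRoot (ell A 1) := by
  rcases Nat.eq_zero_or_pos d with hd | hd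
  · subst hd
    exfalso
    have h := hpsp 0
    simp [Matrix.charpoly, Polynomial.IsRoot, Matrix.det_isEmpty] at h
  set r : ℕ → ℝ := fun k => ell (g k) 1 with hrdef
  have hcard : ∀ M : Matrix (Fin d) (Fin d) ℝ, (specC M).card ≠ 0 := fun M => by
    rw [card_specC]; simp only [Fintype.card_fin]; omega
  have hmax := fun M : Matrix (Fin d) (Fin d) ℝ => ell_one_mem M (hcard M)
  have hub : ∀ k, r k ≤ ∑ i, ∑ j, |(g k) i j| := by
    intro k
    obtain ⟨⟨z, hz, hze⟩, -⟩ := hmax (g k)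
    calc r k = ‖z‖ := hze.symm
    _ ≤ _ := abs_root_le hd (g k) hz
  have hnn : ∀ k, 0 ≤ r k := by
    intro k
    obtain ⟨⟨z, hz, hze⟩, -⟩ := hmax (g k)
    show (0:ℝ) ≤ ell (g k) 1
    rw [← hze]
    exact norm_nonneg _
  have hScont : Continuous (fun M : Matrix (Fin d) (Fin d) ℝ => ∑ i, ∑ j, |M i j|) := by
    refine continuous_finset_sum _ fun i _ => continuous_finset_sum _ fun j _ => ?_
    exact continuous_abs.comp ((continuous_apply j).comp (continuous_apply i))
  have hcont_sum := ((hScont.tendsto A).comp hlim).bddAbove_range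
  obtain ⟨C, hC⟩ := hcont_sum
  have hrC : ∀ k, r k ∈ Set.Icc (0 : ℝ) C := fun k =>
    ⟨hnn k, (hub k).trans (hC ⟨k, rfl⟩)⟩
  obtain ⟨L, -, φ, hφ, hLconv⟩ := tendsto_subseq_of_bounded (Metric.isBounded_Icc 0 C) hrC
  have hgφ : Filter.Tendsto (g ∘ φ) Filter.atTop (nhds A) := hlim.comp hφ.tendsto_atTop
  have hFcont : Continuous (fun p : Matrix (Fin d) (Fin d) ℝ × ℝ =>
      (p.2 • (1 : Matrix (Fin d) (Fin d) ℝ) - p.1).det) :=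
    Continuous.matrix_det ((continuous_snd.smul continuous_const).sub continuous_fst)
  have hroot : A.charpoly.IsRoot L := by
    have h0 : ∀ j : ℕ, ((r (φ j)) • (1 : Matrix (Fin d) (Fin d) ℝ) - g (φ j)).det = 0 :=
      fun j => by rw [← eval_charpoly']; exact hpsp (φ j)
    have ht : Filter.Tendsto (fun j => (g (φ j), r (φ j))) Filter.atTop (nhds (A, L)) :=
      hgφ.prodMk_nhds hLconv
    have h2 := (hFcont.tendsto (A, L)).comp ht
    simp only [Function.comp_def] at h2
    have h3 : (L • (1 : Matrix (Fin d) (Fin d) ℝ) - A).det = 0 :=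
      tendsto_nhds_unique (h2.congr h0) tendsto_const_nhds
    rw [Polynomial.IsRoot, eval_charpoly']
    exact h3
  have hL0 : 0 ≤ L :=
    ge_of_tendsto hLconv (Filter.Eventually.of_forall fun j => hnn (φ j))
  have hLle : L ≤ ell A 1 := by
    have hmem := (isRoot_iff_mem_specC A L).mp hroot
    have h1 := (hmax A).2 _ hmem
    calc L = ‖(L : ℂ)‖ := (Complex.norm_of_nonneg hL0).symm
    _ ≤ ell A 1 := h1
  have hLge : ell A 1 ≤ L := by
    by_contra hlt
    push_neg at hlt
    obtain ⟨⟨z0, hz0mem, hz0abs⟩, -⟩ := hmax A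
    set ε : ℝ := (ell A 1 - L) / 2 with hεdef
    have hεpos : 0 < ε := by rw [hεdef]; linarith
    have hev1 : ∀ᶠ j in Filter.atTop, r (φ j) < L + ε :=
      hLconv.eventually_lt_const (by linarith)
    have hmapc : Continuous (fun M : Matrix (Fin d) (Fin d) ℝ => M.map (algebraMap ℝ ℂ)) :=
      continuous_matrix fun i j =>
        Complex.continuous_ofReal.comp ((continuous_apply j).comp (continuous_apply i))
    have hGcont : Continuous (fun M : Matrix (Fin d) (Fin d) ℝ =>
        (z0 • (1 : Matrix (Fin d) (Fin d) ℂ) - M.map (algebraMap ℝ ℂ)).det) :=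
      Continuous.matrix_det (continuous_const.sub hmapc)
    have hevalz0 : (z0 • (1 : Matrix (Fin d) (Fin d) ℂ) - A.map (algebraMap ℝ ℂ)).det = 0 := by
      rw [← eval_charpoly']
      exact (Polynomial.mem_roots (Matrix.charpoly_monic _).ne_zero).mp hz0mem
    have ht2 := (hGcont.tendsto A).comp hgφ
    simp only [Function.comp_def] at ht2
    rw [hevalz0] at ht2
    have hev2 : ∀ᶠ j in Filter.atTop, ‖(z0 • (1 : Matrix (Fin d) (Fin d) ℂ)
        - (g (φ j)).map (algebraMap ℝ ℂ)).det‖ < ε ^ d := by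
      have habs := ht2.norm
      rw [norm_zero] at habs
      exact habs.eventually_lt_const (pow_pos hεpos d)
    obtain ⟨j, hj1, hj2⟩ := (hev1.and hev2).exists
    set P := (g (φ j)).map (algebraMap ℝ ℂ) with hPdef
    have hprod : ‖(z0 • (1 : Matrix (Fin d) (Fin d) ℂ) - P).det‖₊ =
        ((specC (g (φ j))).map (fun w => ‖z0 - w‖₊)).prod := by
      rw [← eval_charpoly', nnnorm_eval_eq_prod _ (Matrix.charpoly_monic P) z0]
      rfl
    set εn : NNReal := ε.toNNReal with hεndef
    have hεncoe : (εn : ℝ) = ε := Real.coe_toNNReal ε hεpos.le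
    have hlow : ∀ x ∈ (specC (g (φ j))).map (fun w => ‖z0 - w‖₊), εn ≤ x := by
      intro x hx
      rw [Multiset.mem_map] at hx
      obtain ⟨w, hw, hwx⟩ := hx
      have habsw : ‖w‖ ≤ r (φ j) := (hmax (g (φ j))).2 _ hw
      have hwb : ‖w‖ < ell A 1 - ε := by
        have : L + ε = ell A 1 - ε := by rw [hεdef]; ring
        calc ‖w‖ ≤ r (φ j) := habsw
        _ < L + ε := hj1
        _ = ell A 1 - ε := this
      have hdist : ε ≤ ‖z0 - w‖ := by
        have h5 : ‖z0‖ - ‖w‖ ≤ ‖z0 - w‖ := norm_sub_norm_le _ _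
        have h6 : ‖z0‖ = ell A 1 := by rw [hz0abs]
        have h7 : ‖w‖ = ‖w‖ := rfl
        rw [h6, h7] at h5
        linarith
      rw [← hwx, ← NNReal.coe_le_coe, hεncoe, coe_nnnorm]
      exact hdist
    have hcount : Multiset.card ((specC (g (φ j))).map (fun w => ‖z0 - w‖₊)) = d := by
      rw [Multiset.card_map, card_specC]; simp
    have hge : εn ^ d ≤ ((specC (g (φ j))).map (fun w => ‖z0 - w‖₊)).prod := by
      have hple := Multiset.pow_card_le_prod hlow
      rwa [hcount] at hple
    rw [← hprod] at hge
    have hge' : ε ^ d ≤ ‖(z0 • (1 : Matrix (Fin d) (Fin d) ℂ) - P).det‖ := by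
      have := NNReal.coe_le_coe.mpr hge
      rw [NNReal.coe_pow, hεncoe, coe_nnnorm] at this
      exact this
    exact absurd hj2 (not_lt.mpr hge')
  have hLeq : L = ell A 1 := le_antisymm hLle hLge
  rw [← hLeq]
  exact hroot
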